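/- Abstract discrete energy conservation for the θ-scheme: Suppose H₁, H₂ are real inner product spaces, B : H₁ → H₂ is a linear map, and sequences (U^n) in H₁, (P^n) in H₂ satisfy for all n ≥ 1 and all v ∈ H₁: ⟨∂̄_tt U^n, v⟩ + ⟨P^{n;θ}, B v⟩ = 0, and for all n ≥ 0 and all w ∈ H₂: ⟨P^{n+1/2}, w⟩ = ⟨B U^{n+1/2}, w⟩. Then the discrete energy E^{n+1/2} := (1/2)[ ‖∂̄_t U^{n+1/2}‖² + Δt²(θ - 1/4) ‖∂̄_t P^{n+1/2}‖² + ‖P^{n+1/2}‖² ] satisfies E^{n+1/2} = E^{n-1/2} for all n ≥ 1. -/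
import Mathlib


open RealInnerProductSpace

private lemma aux_L1 {H : Type*} [NormedAddCommGroup H] [InnerProductSpace ℝ H]
    (a c e : H) :
    ⟪a - (2 : ℝ) • c + e, a - e⟫ = ‖a - c‖ ^ 2 - ‖c - e‖ ^ 2 := by
  rw [← real_inner_self_eq_norm_sq, ← real_inner_self_eq_norm_sq]
  simp only [inner_sub_left, inner_sub_right, inner_add_left, inner_add_right,
    real_inner_smul_left, real_inner_smul_right]
  linear_combination real_inner_comm a e + real_inner_comm c a + real_inner_comm e c

private lemma aux_L2 {H : Type*} [NormedAddCommGroup H] [InnerProductSpace ℝ H]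
    (θ : ℝ) (p q r : H) :
    ⟪p - r, θ • p + (1 - 2 * θ) • q + θ • r⟫
      = (θ - 1 / 4) * (‖p - q‖ ^ 2 - ‖q - r‖ ^ 2)
        + (1 / 4) * (‖p + q‖ ^ 2 - ‖q + r‖ ^ 2) := by
  rw [← real_inner_self_eq_norm_sq, ← real_inner_self_eq_norm_sq,
    ← real_inner_self_eq_norm_sq, ← real_inner_self_eq_norm_sq]
  simp only [inner_sub_left, inner_sub_right, inner_add_left, inner_add_right,
    real_inner_smul_left, real_inner_smul_right]
  linear_combination (θ - 1 / 2) * real_inner_comm p q - θ * real_inner_comm p r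
    + (θ - 1 / 2) * real_inner_comm q r

theorem discrete_energy_conservation_theta_scheme
    {H₁ H₂ : Type*}
    [NormedAddCommGroup H₁] [InnerProductSpace ℝ H₁]
    [NormedAddCommGroup H₂] [InnerProductSpace ℝ H₂]
    (B : H₁ →ₗ[ℝ] H₂) (Δt : ℝ) (hΔt : 0 < Δt) (θ : ℝ)
    (U : ℤ → H₁) (P : ℤ → H₂)
    (h1 : ∀ n : ℤ, 1 ≤ n → ∀ v : H₁,
      ⟪(Δt ^ 2)⁻¹ • (U (n + 1) - (2 : ℝ) • U n + U (n - 1)), v⟫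
        + ⟪θ • P (n + 1) + (1 - 2 * θ) • P n + θ • P (n - 1), B v⟫ = 0)
    (h2 : ∀ n : ℤ, 0 ≤ n → ∀ w : H₂,
      ⟪(1 / 2 : ℝ) • (P (n + 1) + P n), w⟫
        = ⟪B ((1 / 2 : ℝ) • (U (n + 1) + U n)), w⟫)
    (E : ℤ → ℝ)
    (hE : ∀ n : ℤ, E n = (1 / 2) *
      (‖Δt⁻¹ • (U (n + 1) - U n)‖ ^ 2
        + Δt ^ 2 * (θ - 1 / 4) * ‖Δt⁻¹ • (P (n + 1) - P n)‖ ^ 2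
        + ‖(1 / 2 : ℝ) • (P (n + 1) + P n)‖ ^ 2)) :
    ∀ n : ℤ, 1 ≤ n → E n = E (n - 1) := by
  intro n hn
  have hidx : n - 1 + 1 = n := by ring
  set a := U (n + 1) with ha
  set c := U n with hc
  set e := U (n - 1) with he
  set p := P (n + 1) with hp
  set q := P n with hq
  set r := P (n - 1) with hr
  set Q : H₂ := θ • p + (1 - 2 * θ) • q + θ • r with hQ
  have k1 := h1 n hn (a - e)
  have k2 := h2 n (by omega) Q
  have k3 := h2 (n - 1) (by omega) Q
  rw [hidx] at k3
  simp only [← ha, ← hc, ← he, ← hp, ← hq, ← hr] at k1 k2 k3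
  rw [← hQ] at k1
  -- step: ⟪B a - B e, Q⟫ = ⟪p - r, Q⟫
  have hBQ : ⟪B (a - e), Q⟫ = ⟪p - r, Q⟫ := by
    simp only [map_smul, map_add, map_sub, real_inner_smul_left, inner_add_left,
      inner_sub_left] at k2 k3 ⊢
    linarith
  have key : (Δt ^ 2)⁻¹ * ⟪a - (2 : ℝ) • c + e, a - e⟫ + ⟪p - r, Q⟫ = 0 := by
    rw [real_inner_smul_left] at k1
    linear_combination k1 - hBQ - real_inner_comm (B (a - e)) Q
  rw [aux_L1, aux_L2] at key
  have hE1 := hE n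
  have hE2 := hE (n - 1)
  rw [hidx] at hE2
  rw [hE1, hE2]
  have hΔ : Δt ≠ 0 := hΔt.ne'
  have hns : ∀ x : H₂, ‖Δt⁻¹ • x‖ ^ 2 = (Δt ^ 2)⁻¹ * ‖x‖ ^ 2 := by
    intro x
    rw [norm_smul, Real.norm_eq_abs, abs_inv, abs_of_pos hΔt, mul_pow, inv_pow]
  have hns1 : ∀ x : H₁, ‖Δt⁻¹ • x‖ ^ 2 = (Δt ^ 2)⁻¹ * ‖x‖ ^ 2 := by
    intro x
    rw [norm_smul, Real.norm_eq_abs, abs_inv, abs_of_pos hΔt, mul_pow, inv_pow]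
  have hns2 : ∀ x : H₂, ‖(1 / 2 : ℝ) • x‖ ^ 2 = (1 / 4) * ‖x‖ ^ 2 := by
    intro x
    rw [norm_smul, Real.norm_eq_abs, mul_pow]
    norm_num
  rw [hns1, hns1, hns, hns, hns2, hns2]
  have hΔ2 : Δt ^ 2 * (Δt ^ 2)⁻¹ = 1 := mul_inv_cancel₀ (pow_ne_zero 2 hΔ)
  linear_combination (1 / 2) * key + (1 / 2) * (θ - 1 / 4) * (‖p - q‖ ^ 2 - ‖q - r‖ ^ 2) * hΔ2
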